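/- If a term A satisfies A ⪯ U for a universe U, then there is a universe U' ⪯ U with A ≃ U'. -/

import Mathlib

namespace ECC

/-- Terms of Luo's Extended Calculus of Constructions, in de Bruijn representation. -/
inductive Term : Type
  | var   : ℕ → Term
  | prop  : Term
  | type  : ℕ → Term
  | pi    : Term → Term → Term
  | sigma : Term → Term → Term
  | lam   : Term → Term → Term
  | app   : Term → Term → Term
  | pair  : Term → Term → Term → Term   -- ⟨M, N⟩_B with type annotation B
  | proj1 : Term → Term
  | proj2 : Term → Term
deriving DecidableEq

/-- Lift (shift by `d`) all de Bruijn indices ≥ `k`. -/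
def lift (d : ℕ) : ℕ → Term → Term
  | k, .var n       => if n < k then .var n else .var (n + d)
  | _, .prop        => .prop
  | _, .type j      => .type j
  | k, .pi A B      => .pi (lift d k A) (lift d (k+1) B)
  | k, .sigma A B   => .sigma (lift d k A) (lift d (k+1) B)
  | k, .lam A M     => .lam (lift d k A) (lift d (k+1) M)
  | k, .app M N     => .app (lift d k M) (lift d k N)
  | k, .pair M N B  => .pair (lift d k M) (lift d k N) (lift d k B)
  | k, .proj1 M     => .proj1 (lift d k M)
  | k, .proj2 M     => .proj2 (lift d k M)

/-- Capture-avoiding substitution `[N/x]A` of the term `N` for the variable `x` in `A`. -/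
def subst (N : Term) : ℕ → Term → Term
  | k, .var n       => if n < k then .var n else if n = k then lift k 0 N else .var (n - 1)
  | _, .prop        => .prop
  | _, .type j      => .type j
  | k, .pi A B      => .pi (subst N k A) (subst N (k+1) B)
  | k, .sigma A B   => .sigma (subst N k A) (subst N (k+1) B)
  | k, .lam A M     => .lam (subst N k A) (subst N (k+1) M)
  | k, .app M M'    => .app (subst N k M) (subst N k M')
  | k, .pair M M' B => .pair (subst N k M) (subst N k M') (subst N k B)
  | k, .proj1 M     => .proj1 (subst N k M)
  | k, .proj2 M     => .proj2 (subst N k M)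

/-- `[N/x₀]B` : substitution for the outermost bound variable. -/
def subst0 (B N : Term) : Term := subst N 0 B

/-- One-step reduction (β together with the projection reductions, closed under all
term-formation congruences). -/
inductive Red : Term → Term → Prop
  | beta    : Red (.app (.lam A M) N) (subst0 M N)
  | pr1     : Red (.proj1 (.pair M N B)) M
  | pr2     : Red (.proj2 (.pair M N B)) N
  | piL     : Red A A' → Red (.pi A B) (.pi A' B)
  | piR     : Red B B' → Red (.pi A B) (.pi A B')
  | sigmaL  : Red A A' → Red (.sigma A B) (.sigma A' B)
  | sigmaR  : Red B B' → Red (.sigma A B) (.sigma A B')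
  | lamL    : Red A A' → Red (.lam A M) (.lam A' M)
  | lamR    : Red M M' → Red (.lam A M) (.lam A M')
  | appL    : Red M M' → Red (.app M N) (.app M' N)
  | appR    : Red N N' → Red (.app M N) (.app M N')
  | pairL   : Red M M' → Red (.pair M N B) (.pair M' N B)
  | pairR   : Red N N' → Red (.pair M N B) (.pair M N' B)
  | pairB   : Red B B' → Red (.pair M N B) (.pair M N B')
  | proj1C  : Red M M' → Red (.proj1 M) (.proj1 M')
  | proj2C  : Red M M' → Red (.proj2 M) (.proj2 M')

/-- Conversion `≃` : the equivalence relation generated by reduction. -/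
def Conv : Term → Term → Prop := Relation.EqvGen Red

/-- `A` has a normal form. -/
def HasNF (A : Term) : Prop :=
  ∃ B, Relation.ReflTransGen Red A B ∧ ∀ C, ¬ Red B C

/-- `𝒯` : the set of normalisable terms. -/
def Tset : Set Term := {A | HasNF A}

/-- Universes are `Prop` and the `Type_j`. -/
def IsUniv (T : Term) : Prop := T = .prop ∨ ∃ j, T = .type j

/-- The cumulativity relation `⪯` : the smallest preorder containing conversion,
the universe order, congruence for Π in the codomain, and congruence for Σ in both
components. -/
inductive Cum : Term → Term → Prop
  | conv     : Conv A B → Cum A B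
  | propType : Cum .prop (.type 0)
  | typeType : j ≤ k → Cum (.type j) (.type k)
  | pi       : Conv A A' → Cum B B' → Cum (.pi A B) (.pi A' B')
  | sigma    : Cum A A' → Cum B B' → Cum (.sigma A B) (.sigma A' B')
  | trans    : Cum A B → Cum B C → Cum A C

/-- The strict cumulativity relation `≺` : `A ⪯ B` and `A ≄ B`. -/
def SCum (A B : Term) : Prop := Cum A B ∧ ¬ Conv A B

/-- The stratified cumulativity relations `⪯ᵢ`. -/
inductive CumL : ℕ → Term → Term → Prop
  | conv     : Conv A B → CumL i A B
  | propType : CumL i .prop (.type j)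
  | typeType : j < k → CumL i (.type j) (.type k)
  | succ     : CumL i A B → CumL (i+1) A B
  | pi       : Conv M (.pi A B) → Conv N (.pi A' B') → Conv A A' → CumL i B B' →
               CumL (i+1) M N
  | sigma    : Conv M (.sigma A B) → Conv N (.sigma A' B') → CumL i A A' → CumL i B B' →
               CumL (i+1) M N

/-- Strict stratified cumulativity `≺ᵢ`. -/
def SCumL (i : ℕ) (A B : Term) : Prop := CumL i A B ∧ ¬ Conv A B

/-- Is the outermost symbol of a term Π or Σ? -/
def BinderHeaded : Term → Prop
  | .pi _ _    => True
  | .sigma _ _ => True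
  | _          => False

/-- The base stratum: normalisable terms not convertible to a binder-headed
normalisable term. -/
def Base : Set Term :=
  {T | HasNF T ∧ ¬ ∃ B, HasNF B ∧ BinderHeaded B ∧ Conv T B}

/-- The stratification `(Π_n, Σ_n)` of `𝒯`. -/
def Strata : ℕ → Set Term × Set Term
  | 0 => (Base, Base)
  | n+1 =>
    ({T | ∃ k l, ∃ _ : k + l = n, ∃ A B, HasNF (Term.pi A B) ∧ Conv T (Term.pi A B) ∧
        A ∈ (Strata k).1 ∪ (Strata k).2 ∧ B ∈ (Strata l).1 ∪ (Strata l).2},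
     {T | ∃ k l, ∃ _ : k + l = n, ∃ A B, HasNF (Term.sigma A B) ∧ Conv T (Term.sigma A B) ∧
        A ∈ (Strata k).1 ∪ (Strata k).2 ∧ B ∈ (Strata l).1 ∪ (Strata l).2})
termination_by n => n
decreasing_by all_goals omega

/-- The stratum `Π_n`. -/
def PiStr (n : ℕ) : Set Term := (Strata n).1

/-- The stratum `Σ_n`. -/
def SigStr (n : ℕ) : Set Term := (Strata n).2

/-- The specification of the rank function `φ : 𝒯 → ω`. -/
def PhiSpec (φ : Term → ℕ) : Prop :=
  (∀ M N, HasNF M → HasNF N → Conv M N → φ M = φ N) ∧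
  (∀ T, HasNF T → Conv T .prop → φ T = 2) ∧
  (∀ T j, HasNF T → Conv T (.type j) → φ T = 3 + j) ∧
  (∀ T, T ∈ PiStr 0 → ¬ Conv T .prop → (∀ j, ¬ Conv T (.type j)) → φ T = 1) ∧
  (∀ T A B, HasNF T → (Conv T (.pi A B) ∨ Conv T (.sigma A B)) → φ T = φ A * φ B) ∧
  (∀ T, HasNF T → 0 < φ T)

mutual
/-- Valid contexts of ECC (de Bruijn: the head of the list is the most recent entry). -/
inductive Valid : List Term → Prop
  | nil  : Valid []
  | cons : Typing Γ A (.type j) → Valid (A :: Γ)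

/-- The typing judgement `Γ ⊢ M : A` of ECC. -/
inductive Typing : List Term → Term → Term → Prop
  | prop  : Valid Γ → Typing Γ .prop (.type 0)
  | type  : Valid Γ → Typing Γ (.type j) (.type (j+1))
  | var   : Valid Γ → Γ[(n : ℕ)]? = some A → Typing Γ (.var n) (lift (n+1) 0 A)
  | pi1   : Typing Γ A (.type j) → Typing (A :: Γ) B .prop →
            Typing Γ (.pi A B) .prop
  | pi2   : Typing Γ A (.type j) → Typing (A :: Γ) B (.type j) →
            Typing Γ (.pi A B) (.type j)
  | sig   : Typing Γ A (.type j) → Typing (A :: Γ) B (.type j) →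
            Typing Γ (.sigma A B) (.type j)
  | lam   : Typing (A :: Γ) M B → Typing Γ (.lam A M) (.pi A B)
  | app   : Typing Γ M (.pi A B) → Typing Γ N A → Typing Γ (.app M N) (subst0 B N)
  | pair  : Typing Γ M A → Typing Γ N (subst0 B M) → Typing (A :: Γ) B (.type j) →
            Typing Γ (.pair M N (.sigma A B)) (.sigma A B)
  | proj1 : Typing Γ M (.sigma A B) → Typing Γ (.proj1 M) A
  | proj2 : Typing Γ M (.sigma A B) → Typing Γ (.proj2 M) (subst0 B (.proj1 M))
  | cum   : Typing Γ M A → Typing Γ B (.type j) → Cum A B → Typing Γ M B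
end

/-- `Type_j` for `j ∈ ℤ`, with the convention `Type_{-1} = Prop`. -/
def TType (j : ℤ) : Term := if j < 0 then .prop else .type j.toNat

/-- The typing judgement of the restricted system `ECC⁻`: the rules
`(Π2)(Σ)(app)(pair)(⪯)` of ECC are replaced by `(Π2')(Σ')(app')(pair')` and `(≃)_ρ`. -/
inductive TypingM : List Term → Term → Term → Prop
  | prop  : Valid Γ → TypingM Γ .prop (.type 0)
  | type  : Valid Γ → TypingM Γ (.type j) (.type (j+1))
  | var   : Valid Γ → Γ[(n : ℕ)]? = some A → TypingM Γ (.var n) (lift (n+1) 0 A)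
  | pi1   : TypingM Γ A (.type j) → TypingM (A :: Γ) B .prop →
            TypingM Γ (.pi A B) .prop
  | pi2'  : TypingM Γ A (TType j) → TypingM (A :: Γ) B (TType k) → 0 ≤ k →
            TypingM Γ (.pi A B) (TType (max (max j k) 0))
  | sig'  : TypingM Γ A (TType j) → TypingM (A :: Γ) B (TType k) →
            TypingM Γ (.sigma A B) (TType (max (max j k) 0))
  | lam   : TypingM (A :: Γ) M B → TypingM Γ (.lam A M) (.pi A B)
  | app'  : TypingM Γ M (.pi A B) → TypingM Γ N A' → Cum A' A →
            TypingM Γ (.app M N) (subst0 B N)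
  | pair' : TypingM Γ M A → TypingM Γ N C → TypingM (A' :: Γ) B' (.type j) →
            Cum A A' → Cum C (subst0 B' M) →
            TypingM Γ (.pair M N (.sigma A' B')) (.sigma A' B')
  | proj1 : TypingM Γ M (.sigma A B) → TypingM Γ (.proj1 M) A
  | proj2 : TypingM Γ M (.sigma A B) → TypingM Γ (.proj2 M) (subst0 B (.proj1 M))
  | conv  : TypingM Γ M A → Conv A A' → Typing Γ A' (.type j) → TypingM Γ M A'

end ECC

namespace ECC

theorem lift_lift_comm (d d' : ℕ) (t : Term) : ∀ k k', k ≤ k' →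
    lift d k (lift d' k' t) = lift d' (k' + d) (lift d k t) := by
  induction t with
  | var n =>
    intro k k' h
    simp only [lift]
    split_ifs <;> simp only [lift] <;> split_ifs <;>
      first | rfl | (exfalso; omega) | (congr 1; omega)
  | _ =>
    intro k k' h
    simp only [lift]
    all_goals congr 1 <;>
      first
      | (apply_assumption <;> omega)
      | (rw [Nat.add_right_comm _ d 1]; apply_assumption <;> omega)

theorem lift_lift_add (d d' : ℕ) (t : Term) : ∀ k k', k ≤ k' → k' ≤ k + d →
    lift d' k' (lift d k t) = lift (d + d') k t := by
  induction t with
  | var n =>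
    intro k k' h1 h2
    simp only [lift]
    split_ifs <;> simp only [lift] <;> split_ifs <;>
      first | rfl | (exfalso; omega) | (congr 1; omega)
  | _ =>
    intro k k' h1 h2
    simp only [lift]
    all_goals congr 1 <;> (apply_assumption <;> omega)

theorem subst_lift (N : Term) (d : ℕ) (t : Term) : ∀ j k, j ≤ k →
    subst N (k + d) (lift d j t) = lift d j (subst N k t) := by
  induction t with
  | var n =>
    intro j k h
    simp only [lift, subst]
    split_ifs <;> simp only [lift, subst] <;> split_ifs <;>
      first
      | rfl | (exfalso; omega) | (congr 1; omega)
      | (exact (lift_lift_add k d N 0 j (by omega) (by omega)).symm)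
  | _ =>
    intro j k h
    simp only [lift, subst]
    all_goals congr 1 <;>
      first
      | (apply_assumption <;> omega)
      | (rw [Nat.add_right_comm _ d 1]; apply_assumption <;> omega)

theorem subst_lift_cancel (M : Term) (d : ℕ) (t : Term) : ∀ j i, j ≤ i → i < j + d →
    subst M i (lift d j t) = lift (d-1) j t := by
  induction t with
  | var n =>
    intro j i h1 h2
    simp only [lift, subst]
    split_ifs <;> simp only [lift, subst] <;> split_ifs <;>
      first | rfl | (exfalso; omega) | (congr 1; omega)
  | _ =>
    intro j i h1 h2
    simp only [lift, subst]
    all_goals congr 1 <;> (apply_assumption <;> omega)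

theorem lift_subst (N : Term) (d : ℕ) (t : Term) : ∀ i k, i ≤ k →
    lift d k (subst N i t) = subst (lift d (k - i) N) i (lift d (k+1) t) := by
  induction t with
  | var n =>
    intro i k h
    simp only [lift, subst]
    split_ifs <;> simp only [lift, subst] <;> split_ifs <;>
      first
      | rfl | (exfalso; omega) | (congr 1; omega)
      | (rw [lift_lift_comm i d N 0 (k - i) (by omega),
             show k - i + i = k from by omega])
  | _ =>
    intro i k h
    simp only [lift, subst]
    all_goals congr 1 <;>
      first
      | (apply_assumption <;> omega)
      | (rw [show k - i = k + 1 - (i + 1) from by omega]; apply_assumption <;> omega)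

theorem subst_subst (N P : Term) (t : Term) : ∀ i k, i ≤ k →
    subst N k (subst P i t) = subst (subst N (k-i) P) i (subst N (k+1) t) := by
  induction t with
  | var n =>
    intro i k h
    simp only [subst]
    split_ifs <;> (try simp only [subst]) <;> (try split_ifs) <;>
      first
      | rfl | (exfalso; omega) | (congr 1; omega)
      | (have e := subst_lift N i P 0 (k-i) (Nat.zero_le _)
         rw [Nat.sub_add_cancel (by omega)] at e
         exact e)
      | (rw [subst_lift_cancel (subst N (k-i) P) (k+1) N 0 i (by omega) (by omega),
             Nat.add_sub_cancel])
  | _ =>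
    intro i k h
    simp only [subst]
    all_goals congr 1 <;>
      first
      | (apply_assumption <;> omega)
      | (rw [show k - i = k + 1 - (i + 1) from by omega]; apply_assumption <;> omega)

end ECC

namespace ECC

/-- Parallel reduction (Tait–Martin-Löf). -/
inductive PRed : Term → Term → Prop
  | var   : PRed (.var n) (.var n)
  | prop  : PRed .prop .prop
  | type  : PRed (.type j) (.type j)
  | pi    : PRed A A' → PRed B B' → PRed (.pi A B) (.pi A' B')
  | sigma : PRed A A' → PRed B B' → PRed (.sigma A B) (.sigma A' B')
  | lam   : PRed A A' → PRed M M' → PRed (.lam A M) (.lam A' M')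
  | app   : PRed M M' → PRed N N' → PRed (.app M N) (.app M' N')
  | pair  : PRed M M' → PRed N N' → PRed B B' → PRed (.pair M N B) (.pair M' N' B')
  | proj1 : PRed M M' → PRed (.proj1 M) (.proj1 M')
  | proj2 : PRed M M' → PRed (.proj2 M) (.proj2 M')
  | beta  : PRed M M' → PRed N N' → PRed (.app (.lam A M) N) (subst0 M' N')
  | pr1   : PRed M M' → PRed (.proj1 (.pair M N B)) M'
  | pr2   : PRed N N' → PRed (.proj2 (.pair M N B)) N'

theorem PRed.refl : ∀ t : Term, PRed t t := by
  intro t; induction t <;> constructor <;> assumption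

theorem PRed.lift_ {M M' : Term} (h : PRed M M') :
    ∀ d k, PRed (lift d k M) (lift d k M') := by
  induction h with
  | var => intro d k; simp only [lift]; split_ifs <;> exact .var
  | prop => intro d k; exact .prop
  | type => intro d k; exact .type
  | pi _ _ ih1 ih2 => intro d k; exact .pi (ih1 d k) (ih2 d (k+1))
  | sigma _ _ ih1 ih2 => intro d k; exact .sigma (ih1 d k) (ih2 d (k+1))
  | lam _ _ ih1 ih2 => intro d k; exact .lam (ih1 d k) (ih2 d (k+1))
  | app _ _ ih1 ih2 => intro d k; exact .app (ih1 d k) (ih2 d k)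
  | pair _ _ _ ih1 ih2 ih3 => intro d k; exact .pair (ih1 d k) (ih2 d k) (ih3 d k)
  | proj1 _ ih => intro d k; exact .proj1 (ih d k)
  | proj2 _ ih => intro d k; exact .proj2 (ih d k)
  | @beta M M' N N' A _ _ ih1 ih2 =>
    intro d k
    simp only [lift, subst0]
    rw [lift_subst N' d M' 0 k (Nat.zero_le _), Nat.sub_zero]
    exact PRed.beta (ih1 d (k+1)) (ih2 d k)
  | pr1 _ ih => intro d k; simp only [lift]; exact .pr1 (ih d k)
  | pr2 _ ih => intro d k; simp only [lift]; exact .pr2 (ih d k)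

theorem PRed.subst_ {N N' M M' : Term} (hN : PRed N N') (h : PRed M M') :
    ∀ k, PRed (subst N k M) (subst N' k M') := by
  induction h with
  | var =>
    intro k
    simp only [subst]
    split_ifs
    · exact .var
    · exact hN.lift_ k 0
    · exact .var
  | prop => intro k; exact .prop
  | type => intro k; exact .type
  | pi _ _ ih1 ih2 => intro k; exact .pi (ih1 k) (ih2 (k+1))
  | sigma _ _ ih1 ih2 => intro k; exact .sigma (ih1 k) (ih2 (k+1))
  | lam _ _ ih1 ih2 => intro k; exact .lam (ih1 k) (ih2 (k+1))
  | app _ _ ih1 ih2 => intro k; exact .app (ih1 k) (ih2 k)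
  | pair _ _ _ ih1 ih2 ih3 => intro k; exact .pair (ih1 k) (ih2 k) (ih3 k)
  | proj1 _ ih => intro k; exact .proj1 (ih k)
  | proj2 _ ih => intro k; exact .proj2 (ih k)
  | @beta M M' P P' A _ _ ih1 ih2 =>
    intro k
    simp only [subst, subst0]
    rw [subst_subst N' P' M' 0 k (Nat.zero_le _), Nat.sub_zero]
    exact PRed.beta (ih1 (k+1)) (ih2 k)
  | pr1 _ ih => intro k; simp only [subst]; exact .pr1 (ih k)
  | pr2 _ ih => intro k; simp only [subst]; exact .pr2 (ih k)

/-- Complete development. -/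
def rho : Term → Term
  | .app (.lam _ M) N => subst0 (rho M) (rho N)
  | .proj1 (.pair M _ _) => rho M
  | .proj2 (.pair _ N _) => rho N
  | .var n => .var n
  | .prop => .prop
  | .type j => .type j
  | .pi A B => .pi (rho A) (rho B)
  | .sigma A B => .sigma (rho A) (rho B)
  | .lam A M => .lam (rho A) (rho M)
  | .app M N => .app (rho M) (rho N)
  | .pair M N B => .pair (rho M) (rho N) (rho B)
  | .proj1 M => .proj1 (rho M)
  | .proj2 M => .proj2 (rho M)

theorem PRed.lam_inv {A M T : Term} (h : PRed (.lam A M) T) :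
    ∃ A' M', T = .lam A' M' ∧ PRed A A' ∧ PRed M M' := by
  cases h with
  | lam h1 h2 => exact ⟨_, _, rfl, h1, h2⟩

theorem PRed.pair_inv {M N B T : Term} (h : PRed (.pair M N B) T) :
    ∃ M' N' B', T = .pair M' N' B' ∧ PRed M M' ∧ PRed N N' ∧ PRed B B' := by
  cases h with
  | pair h1 h2 h3 => exact ⟨_, _, _, rfl, h1, h2, h3⟩

theorem PRed.triangle {t s : Term} (h : PRed t s) : PRed s (rho t) := by
  induction h with
  | var => exact .var
  | prop => exact .prop
  | type => exact .type
  | pi _ _ ih1 ih2 => exact .pi ih1 ih2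
  | sigma _ _ ih1 ih2 => exact .sigma ih1 ih2
  | lam _ _ ih1 ih2 => exact .lam ih1 ih2
  | @app M M' N N' hM hN ihM ihN =>
    cases M with
    | lam A P =>
      obtain ⟨A', P', rfl, hA, hP⟩ := hM.lam_inv
      simp only [rho] at ihM ⊢
      cases ihM with
      | lam ihA ihP => exact PRed.beta ihP ihN
    | _ => first
      | exact .app ihM ihN
      | (simp only [rho]; exact .app ihM ihN)
  | @pair M M' N N' B B' _ _ _ ih1 ih2 ih3 => exact .pair ih1 ih2 ih3
  | @proj1 M M' hM ihM =>
    cases M with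
    | pair P Q B =>
      obtain ⟨P', Q', B', rfl, hP, hQ, hB⟩ := hM.pair_inv
      simp only [rho] at ihM ⊢
      cases ihM with
      | pair ihP ihQ ihB => exact PRed.pr1 ihP
    | _ => first
      | exact .proj1 ihM
      | (simp only [rho]; exact .proj1 ihM)
  | @proj2 M M' hM ihM =>
    cases M with
    | pair P Q B =>
      obtain ⟨P', Q', B', rfl, hP, hQ, hB⟩ := hM.pair_inv
      simp only [rho] at ihM ⊢
      cases ihM with
      | pair ihP ihQ ihB => exact PRed.pr2 ihQ
    | _ => first
      | exact .proj2 ihM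
      | (simp only [rho]; exact .proj2 ihM)
  | @beta M M' N N' A _ _ ihM ihN =>
    simp only [rho, subst0]
    exact PRed.subst_ ihN ihM 0
  | @pr1 M M' N B _ ih =>
    simp only [rho]
    exact ih
  | @pr2 N N' M B _ ih =>
    simp only [rho]
    exact ih

theorem PRed.diamond {a b c : Term} (h1 : PRed a b) (h2 : PRed a c) :
    ∃ d, PRed b d ∧ PRed c d :=
  ⟨rho a, h1.triangle, h2.triangle⟩

end ECC

namespace ECC

theorem Red.pred {a b : Term} (h : Red a b) : PRed a b := by
  induction h with
  | beta => exact .beta (PRed.refl _) (PRed.refl _)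
  | pr1 => exact .pr1 (PRed.refl _)
  | pr2 => exact .pr2 (PRed.refl _)
  | piL _ ih => exact .pi ih (PRed.refl _)
  | piR _ ih => exact .pi (PRed.refl _) ih
  | sigmaL _ ih => exact .sigma ih (PRed.refl _)
  | sigmaR _ ih => exact .sigma (PRed.refl _) ih
  | lamL _ ih => exact .lam ih (PRed.refl _)
  | lamR _ ih => exact .lam (PRed.refl _) ih
  | appL _ ih => exact .app ih (PRed.refl _)
  | appR _ ih => exact .app (PRed.refl _) ih
  | pairL _ ih => exact .pair ih (PRed.refl _) (PRed.refl _)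
  | pairR _ ih => exact .pair (PRed.refl _) ih (PRed.refl _)
  | pairB _ ih => exact .pair (PRed.refl _) (PRed.refl _) ih
  | proj1C _ ih => exact .proj1 ih
  | proj2C _ ih => exact .proj2 ih

open Relation in
theorem rtg_congr2 {f : Term → Term → Term}
    (hL : ∀ {x y B}, Red x y → Red (f x B) (f y B))
    (hR : ∀ {x y A}, Red x y → Red (f A x) (f A y))
    {A A' B B' : Term} (h1 : ReflTransGen Red A A') (h2 : ReflTransGen Red B B') :
    ReflTransGen Red (f A B) (f A' B') :=
  (ReflTransGen.lift (fun x => f x B) (fun _ _ h => hL h) _ _ h1).trans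
    (ReflTransGen.lift (fun y => f A' y) (fun _ _ h => hR h) _ _ h2)

open Relation in
theorem PRed.rtg {a b : Term} (h : PRed a b) : ReflTransGen Red a b := by
  induction h with
  | var => exact .refl
  | prop => exact .refl
  | type => exact .refl
  | pi _ _ ih1 ih2 => exact rtg_congr2 (f := Term.pi) Red.piL Red.piR ih1 ih2
  | sigma _ _ ih1 ih2 => exact rtg_congr2 (f := Term.sigma) Red.sigmaL Red.sigmaR ih1 ih2
  | lam _ _ ih1 ih2 => exact rtg_congr2 (f := Term.lam) Red.lamL Red.lamR ih1 ih2
  | app _ _ ih1 ih2 => exact rtg_congr2 (f := Term.app) Red.appL Red.appR ih1 ih2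
  | @pair M M' N N' B B' _ _ _ ih1 ih2 ih3 =>
    exact (rtg_congr2 (f := fun x y => Term.pair x y B) Red.pairL Red.pairR ih1 ih2).trans
      (ReflTransGen.lift (fun y => Term.pair M' N' y) (fun _ _ h => Red.pairB h) _ _ ih3)
  | proj1 _ ih => exact ReflTransGen.lift Term.proj1 (fun _ _ h => Red.proj1C h) _ _ ih
  | proj2 _ ih => exact ReflTransGen.lift Term.proj2 (fun _ _ h => Red.proj2C h) _ _ ih
  | @beta M M' N N' A _ _ ih1 ih2 =>
    refine ReflTransGen.trans ?_ (ReflTransGen.single (Red.beta (A := A)))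
    exact rtg_congr2 (f := Term.app) Red.appL Red.appR
      (ReflTransGen.lift (fun y => Term.lam A y) (fun _ _ h => Red.lamR h) _ _ ih1) ih2
  | @pr1 M M' N B _ ih =>
    exact (ReflTransGen.single Red.pr1).trans ih
  | @pr2 N N' M B _ ih =>
    exact (ReflTransGen.single Red.pr2).trans ih

open Relation in
theorem rtg_red_iff_rtg_pred {a b : Term} :
    ReflTransGen Red a b ↔ ReflTransGen PRed a b := by
  constructor
  · exact fun h => ReflTransGen.mono (fun _ _ hr => hr.pred) _ _ h
  · intro h
    induction h with
    | refl => exact .refl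
    | tail h1 h2 ih => exact ih.trans h2.rtg

open Relation in
theorem equivJoin : Equivalence (Join (ReflTransGen PRed)) :=
  equivalence_join_reflTransGen fun _ _ _ h1 h2 =>
    let ⟨d, h3, h4⟩ := PRed.diamond h1 h2
    ⟨d, ReflGen.single h3, ReflTransGen.single h4⟩

open Relation in
theorem conv_join {a b : Term} (h : Conv a b) : Join (ReflTransGen Red) a b := by
  have : Join (ReflTransGen PRed) a b := by
    induction h with
    | rel _ _ hr => exact ⟨_, ReflTransGen.single hr.pred, ReflTransGen.refl⟩
    | refl x => exact equivJoin.refl x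
    | symm _ _ _ ih => exact equivJoin.symm ih
    | trans _ _ _ _ _ ih1 ih2 => exact equivJoin.trans ih1 ih2
  obtain ⟨c, h1, h2⟩ := this
  exact ⟨c, rtg_red_iff_rtg_pred.mpr h1, rtg_red_iff_rtg_pred.mpr h2⟩

theorem univ_no_red {U V : Term} (hU : IsUniv U) (h : Red U V) : False := by
  rcases hU with rfl | ⟨j, rfl⟩ <;> cases h

open Relation in
theorem rtg_univ {U X : Term} (hU : IsUniv U) (h : ReflTransGen Red U X) : X = U := by
  rcases h.cases_head with rfl | ⟨c, hc, _⟩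
  · rfl
  · exact absurd hc (univ_no_red hU)

open Relation in
theorem rtg_pi_shape {A B X : Term} (h : ReflTransGen Red (.pi A B) X) :
    ∃ A' B', X = .pi A' B' := by
  induction h with
  | refl => exact ⟨A, B, rfl⟩
  | tail _ h2 ih =>
    obtain ⟨A', B', rfl⟩ := ih
    cases h2 with
    | piL h => exact ⟨_, _, rfl⟩
    | piR h => exact ⟨_, _, rfl⟩

open Relation in
theorem rtg_sigma_shape {A B X : Term} (h : ReflTransGen Red (.sigma A B) X) :
    ∃ A' B', X = .sigma A' B' := by
  induction h with
  | refl => exact ⟨A, B, rfl⟩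
  | tail _ h2 ih =>
    obtain ⟨A', B', rfl⟩ := ih
    cases h2 with
    | sigmaL h => exact ⟨_, _, rfl⟩
    | sigmaR h => exact ⟨_, _, rfl⟩

theorem not_conv_pi_univ {A B U : Term} (hU : IsUniv U) (h : Conv (.pi A B) U) : False := by
  obtain ⟨c, h1, h2⟩ := conv_join h
  obtain ⟨A', B', rfl⟩ := rtg_pi_shape h1
  have := rtg_univ hU h2
  rcases hU with rfl | ⟨j, rfl⟩ <;> simp_all

theorem not_conv_sigma_univ {A B U : Term} (hU : IsUniv U) (h : Conv (.sigma A B) U) : False := by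
  obtain ⟨c, h1, h2⟩ := conv_join h
  obtain ⟨A', B', rfl⟩ := rtg_sigma_shape h1
  have := rtg_univ hU h2
  rcases hU with rfl | ⟨j, rfl⟩ <;> simp_all

theorem conv_univ_eq {U V : Term} (hU : IsUniv U) (hV : IsUniv V) (h : Conv U V) : U = V := by
  obtain ⟨c, h1, h2⟩ := conv_join h
  rw [← rtg_univ hU h1, ← rtg_univ hV h2]

theorem cum_conv_univ {A B : Term} (h : Cum A B) :
    ∀ U, IsUniv U → Conv B U → ∃ U', IsUniv U' ∧ Cum U' U ∧ Conv A U' := by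
  induction h with
  | conv hAB =>
    intro U hU hBU
    exact ⟨U, hU, Cum.conv (Relation.EqvGen.refl U), Relation.EqvGen.trans _ _ _ hAB hBU⟩
  | propType =>
    intro U hU hBU
    obtain rfl : Term.type 0 = U := conv_univ_eq (Or.inr ⟨0, rfl⟩) hU hBU
    exact ⟨.prop, Or.inl rfl, Cum.propType, Relation.EqvGen.refl _⟩
  | @typeType j k hjk =>
    intro U hU hBU
    obtain rfl : Term.type k = U := conv_univ_eq (Or.inr ⟨k, rfl⟩) hU hBU
    exact ⟨.type j, Or.inr ⟨j, rfl⟩, Cum.typeType hjk, Relation.EqvGen.refl _⟩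
  | pi _ _ _ =>
    intro U hU hBU
    exact absurd hBU fun h => not_conv_pi_univ hU h
  | sigma _ _ _ _ =>
    intro U hU hBU
    exact absurd hBU fun h => not_conv_sigma_univ hU h
  | trans _ _ ih1 ih2 =>
    intro U hU hBU
    obtain ⟨U'', hu2, hcum2, hconv2⟩ := ih2 U hU hBU
    obtain ⟨U', hu1, hcum1, hconv1⟩ := ih1 U'' hu2 hconv2
    exact ⟨U', hu1, Cum.trans hcum1 hcum2, hconv1⟩

end ECC

/-- if `A ⪯ U` for a universe `U`, then there is a universe `U' ⪯ U`
with `A ≃ U'`. -/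
theorem cum_below_universe (A U : ECC.Term) (hU : ECC.IsUniv U) (h : ECC.Cum A U) :
    ∃ U', ECC.IsUniv U' ∧ ECC.Cum U' U ∧ ECC.Conv A U' :=
  ECC.cum_conv_univ h U hU (Relation.EqvGen.refl U)
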